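/- arXiv:1904.11667 — 6 statements merged into one kernel-verified Lean document; each statement's English description precedes it below -/
import Mathlib

section
/- Let k ≥ 2 and let s = k·k_s + 1, r = k·k_r, d = k·k_d with integers k_s, k_r ≥ 0 and k_d ≥ 1. Then there exists X ∈ E(s,r,d) all of whose zeros and poles are simple (all roots of Q and of P have multiplicity 1) and which is left invariant by the rotation of order k about some point C ∈ ℂ, where C is a (simple) zero of X; in particular the isotropy group of X contains a cyclic group of order k. -/
open Polynomial

noncomputable section

/-- The data `(λ, Q, P, E)` of an element `X ∈ E(s,r,d)`:
`λ ≠ 0`, `Q`, `P` monic of degrees `s`, `r` with no common roots,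
and `deg E = d`. -/
def EData (s r d : ℕ) (lam : ℂ) (Q P E : Polynomial ℂ) : Prop :=
  lam ≠ 0 ∧ Q.Monic ∧ P.Monic ∧ Q.natDegree = s ∧ P.natDegree = r ∧
    E.natDegree = d ∧ ∀ z : ℂ, ¬ (Q.IsRoot z ∧ P.IsRoot z)

/-- The affine map `T(w) = a·w + b` leaves the vector field with data `(λ,Q,P,E)`
invariant: `Q(aw+b)·P(w)·exp(E(aw+b)) = a·Q(w)·P(aw+b)·exp(E(w))` for all `w`. -/
def LeavesInv (Q P E : Polynomial ℂ) (a b : ℂ) : Prop :=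
  ∀ w : ℂ,
    Q.eval (a * w + b) * P.eval w * Complex.exp (E.eval (a * w + b)) =
      a * Q.eval w * P.eval (a * w + b) * Complex.exp (E.eval w)

/-! ### Auxiliary lemmas -/

lemma aux_qmonic (n : ℕ) (hn : 2 ≤ n) : (X ^ n - X : Polynomial ℂ).Monic := by
  have h : n = (n - 1) + 1 := by omega
  rw [h]
  exact monic_X_pow_sub (by rw [degree_X]; exact_mod_cast (by omega : 1 < n - 1 + 1))

lemma aux_qdeg (n : ℕ) (hn : 2 ≤ n) : (X ^ n - X : Polynomial ℂ).natDegree = n := by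
  rw [natDegree_sub_eq_left_of_natDegree_lt] <;> simp [natDegree_X_pow] <;> omega

lemma aux_qmult (n : ℕ) (hn : 2 ≤ n) (z : ℂ) :
    (X ^ n - X : Polynomial ℂ).rootMultiplicity z ≤ 1 := by
  by_contra h
  push_neg at h
  rw [one_lt_rootMultiplicity_iff_isRoot (aux_qmonic n hn).ne_zero] at h
  obtain ⟨h1, h2⟩ := h
  simp [IsRoot, sub_eq_zero, derivative_X_pow] at h1 h2
  rcases eq_or_ne z 0 with hz | hz
  · rw [hz, zero_pow (by omega : n - 1 ≠ 0)] at h2; simp at h2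
  · have hpow : z ^ (n - 1) = 1 := by
      have hmul : z ^ (n - 1) * z = 1 * z := by
        rw [one_mul, ← pow_succ]
        have hn1 : n - 1 + 1 = n := by omega
        rw [hn1, h1]
      exact mul_right_cancel₀ hz hmul
    rw [hpow, mul_one] at h2
    have hcast : (n : ℂ) = (1 : ℕ) := by exact_mod_cast h2
    have := Nat.cast_injective (R := ℂ) hcast
    omega

lemma aux_qroot (n : ℕ) (hn : 2 ≤ n) (z : ℂ) (h : (X ^ n - X : Polynomial ℂ).IsRoot z) :
    ‖z‖ ≤ 1 := by
  simp [IsRoot, sub_eq_zero] at h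
  by_contra hgt
  push_neg at hgt
  have habs := congrArg norm h
  rw [norm_pow] at habs
  nlinarith [pow_lt_pow_right₀ hgt (by omega : 1 < n),
    pow_le_pow_left₀ (by positivity : (0:ℝ) ≤ 1) hgt.le n]

lemma aux_pmonic (m : ℕ) (hm : 1 ≤ m) : ((X:Polynomial ℂ) ^ m - C 2).Monic := by
  have h : m = (m - 1) + 1 := by omega
  rw [h]
  refine monic_X_pow_sub (lt_of_le_of_lt degree_C_le ?_)
  exact_mod_cast Nat.succ_pos (m-1)

lemma aux_pmult (m : ℕ) (hm : 1 ≤ m) (z : ℂ) :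
    ((X:Polynomial ℂ) ^ m - C 2).rootMultiplicity z ≤ 1 := by
  by_contra h
  push_neg at h
  rw [one_lt_rootMultiplicity_iff_isRoot (aux_pmonic m hm).ne_zero] at h
  obtain ⟨h1, h2⟩ := h
  simp [IsRoot, sub_eq_zero, derivative_X_pow] at h1 h2
  rcases h2 with h2 | ⟨h2, -⟩
  · omega
  · rw [h2, zero_pow (by omega : m ≠ 0)] at h1; norm_num at h1

lemma aux_proot (m : ℕ) (hm : 1 ≤ m) (z : ℂ) (h : ((X:Polynomial ℂ) ^ m - C 2).IsRoot z) :
    1 < ‖z‖ := by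
  simp [IsRoot, sub_eq_zero] at h
  by_contra hle
  push_neg at hle
  have h2 : ‖z‖ ^ m = 2 := by
    have habs := congrArg norm h
    rw [norm_pow, Complex.norm_two] at habs; exact habs
  linarith [pow_le_one₀ (by positivity : (0:ℝ) ≤ ‖z‖) hle (n := m)]

/-- for `k ≥ 2`, `s = k·k_s + 1`, `r = k·k_r`, `d = k·k_d` with
`k_d ≥ 1`, there exists `X ∈ E(s,r,d)` with all zeros and poles simple which
is left invariant by the rotation of order `k` about some point `C`, `C` being
a simple zero of `X`. -/
theorem stmt10 (k ks kr kd : ℕ) (hk : 2 ≤ k) (hkd : 1 ≤ kd)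
    (s r d : ℕ) (hs : s = k * ks + 1) (hr : r = k * kr) (hd : d = k * kd) :
    ∃ (lam : ℂ) (Q P E : Polynomial ℂ) (c a : ℂ),
      EData s r d lam Q P E ∧
      (∀ z : ℂ, Q.rootMultiplicity z ≤ 1) ∧
      (∀ z : ℂ, P.rootMultiplicity z ≤ 1) ∧
      IsPrimitiveRoot a k ∧
      LeavesInv Q P E a (c - a * c) ∧
      Q.IsRoot c ∧ Q.rootMultiplicity c = 1 := by
  subst hs hr hd
  have hk0 : k ≠ 0 := by omega
  set a : ℂ := Complex.exp (2 * Real.pi * Complex.I / k) with ha_def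
  have ha : IsPrimitiveRoot a k := Complex.isPrimitiveRoot_exp k hk0
  have hak : a ^ k = 1 := ha.pow_eq_one
  -- construct Q
  obtain ⟨Q, hQm, hQd, hQmult, hQroot0, hQrootle, hQeq⟩ :
      ∃ Q : Polynomial ℂ, Q.Monic ∧ Q.natDegree = k * ks + 1 ∧
        (∀ z : ℂ, Q.rootMultiplicity z ≤ 1) ∧ Q.IsRoot 0 ∧
        (∀ z : ℂ, Q.IsRoot z → ‖z‖ ≤ 1) ∧
        (∀ w : ℂ, Q.eval (a * w) = a * Q.eval w) := by
    rcases Nat.eq_zero_or_pos ks with hks | hks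
    · refine ⟨X, monic_X, by simp [hks], ?_, by simp [IsRoot], ?_, by simp⟩
      · intro z
        have hX : (X : Polynomial ℂ) = X - C 0 := by simp
        rw [hX, rootMultiplicity_X_sub_C]
        split <;> omega
      · intro z hz
        simp [IsRoot] at hz
        simp [hz]
    · set n := k * ks + 1 with hn_def
      have hn : 2 ≤ n := by
        have : 1 ≤ k * ks := Nat.one_le_iff_ne_zero.mpr (by positivity)
        omega
      have han : a ^ n = a := by
        rw [hn_def, pow_succ, pow_mul, hak, one_pow, one_mul]
      refine ⟨X ^ n - X, aux_qmonic n hn, aux_qdeg n hn, aux_qmult n hn, ?_,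
        aux_qroot n hn, ?_⟩
      · simp [IsRoot, zero_pow (by omega : n ≠ 0)]
      · intro w
        simp only [eval_sub, eval_pow, eval_X, mul_pow, han]
        ring
  -- construct P
  obtain ⟨P, hPm, hPd, hPmult, hProotgt, hPeq⟩ :
      ∃ P : Polynomial ℂ, P.Monic ∧ P.natDegree = k * kr ∧
        (∀ z : ℂ, P.rootMultiplicity z ≤ 1) ∧
        (∀ z : ℂ, P.IsRoot z → 1 < ‖z‖) ∧
        (∀ w : ℂ, P.eval (a * w) = P.eval w) := by
    rcases Nat.eq_zero_or_pos kr with hkr | hkr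
    · refine ⟨1, monic_one, by simp [hkr], ?_, ?_, by simp⟩
      · intro z
        rw [rootMultiplicity_eq_zero (by simp [IsRoot])]
        omega
      · intro z hz
        simp [IsRoot] at hz
    · set m := k * kr with hm_def
      have hm : 1 ≤ m := Nat.one_le_iff_ne_zero.mpr (Nat.mul_ne_zero hk0 (by omega))
      have ham : a ^ m = 1 := by rw [hm_def, pow_mul, hak, one_pow]
      refine ⟨X ^ m - C 2, aux_pmonic m hm, natDegree_X_pow_sub_C, aux_pmult m hm,
        aux_proot m hm, ?_⟩
      intro w
      simp only [eval_sub, eval_pow, eval_X, eval_C, mul_pow, ham, one_mul]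
  -- E
  have haE : a ^ (k * kd) = 1 := by rw [pow_mul, hak, one_pow]
  refine ⟨1, Q, P, X ^ (k * kd), 0, a, ?_, hQmult, hPmult, ha, ?_, hQroot0, ?_⟩
  · refine ⟨one_ne_zero, hQm, hPm, hQd, hPd, natDegree_X_pow _, ?_⟩
    rintro z ⟨hzQ, hzP⟩
    exact absurd (hQrootle z hzQ) (not_le.mpr (hProotgt z hzP))
  · intro w
    have harg : a * w + ((0:ℂ) - a * 0) = a * w := by ring
    have hE : eval (a * w) (X ^ (k * kd) : Polynomial ℂ) = eval w (X ^ (k * kd)) := by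
      simp only [eval_pow, eval_X, mul_pow, haE, one_mul]
    rw [harg, hQeq, hPeq, hE]
  · have hpos : 0 < Q.rootMultiplicity 0 :=
      (rootMultiplicity_pos hQm.ne_zero).mpr hQroot0
    have := hQmult 0
    omega
end
end

section
/- Let s, r ≥ 0 and d ≥ 1 be integers, let X ∈ E(s,r,d) have data (λ, Q, P, E), and suppose a rotation of order k ≥ 2 about C ∈ ℂ leaves X invariant. Then the barycenters of the three root configurations all equal C: the sum of the roots of Q counted with multiplicity equals s·C, the sum of the roots of P counted with multiplicity equals r·C, and the sum of the roots of E counted with multiplicity equals d·C. -/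
open Polynomial

noncomputable section

lemma sum_map_affine (s : Multiset ℂ) (p q : ℂ) :
    (s.map fun t => p * t + q).sum = p * s.sum + (Multiset.card s : ℂ) * q := by
  induction s using Multiset.induction with
  | empty => simp
  | cons x s ih => simp [ih]; push_cast; ring

lemma roots_comp_linear (F : Polynomial ℂ) {a : ℂ} (b : ℂ) (ha : a ≠ 0) :
    (F.comp (C a * X + C b)).roots = F.roots.map (fun t => a⁻¹ * (t - b)) := by
  rcases eq_or_ne F 0 with rfl | hF
  · simp
  have hsplit : Splits F := IsAlgClosed.splits F
  have hstep : ∀ t : ℂ, (X - C t).comp (C a * X + C b)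
      = C a * (X - C (a⁻¹ * (t - b))) := by
    intro t
    rw [sub_comp, X_comp, C_comp, mul_sub, ← C_mul, mul_inv_cancel_left₀ ha]
    rw [C_sub]; ring
  conv_lhs => rw [hsplit.eq_prod_roots]
  rw [mul_comp, C_comp, multiset_prod_comp, Multiset.map_map]
  simp only [Function.comp, hstep]
  rw [Multiset.prod_map_mul]
  have h1 : (F.roots.map fun _ : ℂ => C a).prod = C (a ^ Multiset.card F.roots) := by
    rw [Multiset.map_const', Multiset.prod_replicate, C_pow]
  have h2 : (F.roots.map fun t => X - C (a⁻¹ * (t - b))).prod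
      = ((F.roots.map fun t => a⁻¹ * (t - b)).map fun u => X - C u).prod := by
    rw [Multiset.map_map]; rfl
  rw [h1, ← mul_assoc, ← C_mul, h2, roots_C_mul, roots_multiset_prod_X_sub_C]
  exact mul_ne_zero (leadingCoeff_ne_zero.mpr hF) (pow_ne_zero _ ha)

lemma sum_roots_of_comp {F : Polynomial ℂ} (hF : F ≠ 0) {a c u : ℂ} (ha : a ≠ 0)
    (ha1 : a ≠ 1) (hu : u ≠ 0)
    (h : F.comp (C a * X + C (c - a * c)) = C u * F) :
    F.roots.sum = (F.natDegree : ℂ) * c := by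
  have hroots : F.roots.map (fun t => a⁻¹ * (t - (c - a * c))) = F.roots := by
    rw [← roots_comp_linear F (c - a * c) ha, h, roots_C_mul _ hu]
  have hcard : (Multiset.card F.roots : ℂ) = (F.natDegree : ℂ) := by
    have := Splits.natDegree_eq_card_roots
      (IsAlgClosed.splits F)
    exact_mod_cast this.symm
  have hsum := congrArg Multiset.sum hroots
  have hmap : (F.roots.map fun t => a⁻¹ * (t - (c - a * c)))
      = F.roots.map fun t => a⁻¹ * t + (-(a⁻¹ * (c - a * c))) := by
    apply Multiset.map_congr rfl; intro t _; ring
  rw [hmap, sum_map_affine, hcard] at hsum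
  have ha1' : a - 1 ≠ 0 := sub_ne_zero.mpr ha1
  field_simp at hsum
  have h2 : (a - 1) * (F.roots.sum - (F.natDegree : ℂ) * c) = 0 := by
    linear_combination (-1 : ℂ) * hsum
  rcases mul_eq_zero.mp h2 with h | h
  · exact absurd h ha1'
  · exact sub_eq_zero.mp h

/-- if a rotation of order `k ≥ 2` about `C` leaves
`X ∈ E(s,r,d)` invariant, then the barycenters of the roots of `Q`, `P` and
`E` (counted with multiplicity) all equal `C`: the root sums are `s·C`, `r·C`
and `d·C` respectively. -/
theorem stmt11 (s r d : ℕ) (hd : 1 ≤ d)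
    (lam : ℂ) (Q P E : Polynomial ℂ) (hX : EData s r d lam Q P E)
    (k : ℕ) (hk : 2 ≤ k) (a c : ℂ) (hprim : IsPrimitiveRoot a k)
    (hinv : LeavesInv Q P E a (c - a * c)) :
    Q.roots.sum = (s : ℂ) * c ∧
    P.roots.sum = (r : ℂ) * c ∧
    E.roots.sum = (d : ℂ) * c := by
  obtain ⟨hlam, hQm, hPm, hQd, hPd, hEd, hnocomm⟩ := hX
  have ha0 : a ≠ 0 := by
    intro h
    have := hprim.pow_eq_one
    rw [h, zero_pow (by omega : k ≠ 0)] at this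
    exact zero_ne_one this
  have ha1 : a ≠ 1 := hprim.ne_one (by omega)
  set b : ℂ := c - a * c with hb
  set M : Polynomial ℂ := C a * X + C b with hM
  have hMdeg : M.natDegree = 1 := natDegree_linear ha0
  have hMeval : ∀ w : ℂ, M.eval w = a * w + b := by intro w; simp [hM]
  have hQ0 : Q ≠ 0 := hQm.ne_zero
  have hP0 : P ≠ 0 := hPm.ne_zero
  have hE0 : E ≠ 0 := by intro h; rw [h, natDegree_zero] at hEd; omega
  have hcompne : ∀ F : Polynomial ℂ, F ≠ 0 → F.comp M ≠ 0 := by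
    intro F hF
    rcases Nat.eq_zero_or_pos F.natDegree with h0 | h0
    · rw [eq_C_of_natDegree_eq_zero h0, C_comp]
      intro hc
      rw [eq_C_of_natDegree_eq_zero h0] at hF
      exact hF hc
    · intro hc
      have := leadingCoeff_comp (p := F) (q := M) (by rw [hMdeg]; omega)
      rw [hc, leadingCoeff_zero] at this
      have hlM : M.leadingCoeff = a := by
        rw [hM]; exact leadingCoeff_linear ha0
      rw [hlM] at this
      exact (mul_ne_zero (leadingCoeff_ne_zero.mpr hF) (pow_ne_zero _ ha0)) this.symm
  set A : Polynomial ℂ := (Q.comp M) * P with hA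
  set B : Polynomial ℂ := C a * Q * (P.comp M) with hB
  have hA0 : A ≠ 0 := mul_ne_zero (hcompne Q hQ0) hP0
  have hB0 : B ≠ 0 := mul_ne_zero (mul_ne_zero (C_ne_zero.mpr ha0) hQ0) (hcompne P hP0)
  set U : Polynomial ℂ := E.comp M with hU
  have hUeval : ∀ w : ℂ, U.eval w = E.eval (a * w + b) := by
    intro w; rw [hU, eval_comp, hMeval]
  have h1 : ∀ w : ℂ, A.eval w * Complex.exp (U.eval w)
      = B.eval w * Complex.exp (E.eval w) := by
    intro w
    rw [hUeval, hA, hB]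
    simp only [eval_mul, eval_comp, hMeval, eval_C]
    linear_combination hinv w
  have h2 : ∀ w : ℂ,
      (A.derivative.eval w + A.eval w * U.derivative.eval w) * B.eval w
        = (B.derivative.eval w + B.eval w * E.derivative.eval w) * A.eval w := by
    intro w
    have hfg : (fun w => A.eval w * Complex.exp (U.eval w))
        = (fun w => B.eval w * Complex.exp (E.eval w)) := funext h1
    have hdA : HasDerivAt (fun w => A.eval w * Complex.exp (U.eval w))
        (A.derivative.eval w * Complex.exp (U.eval w)
          + A.eval w * (Complex.exp (U.eval w) * U.derivative.eval w)) w :=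
      (A.hasDerivAt w).mul ((U.hasDerivAt w).cexp)
    have hdB : HasDerivAt (fun w => B.eval w * Complex.exp (E.eval w))
        (B.derivative.eval w * Complex.exp (E.eval w)
          + B.eval w * (Complex.exp (E.eval w) * E.derivative.eval w)) w :=
      (B.hasDerivAt w).mul ((E.hasDerivAt w).cexp)
    rw [hfg] at hdA
    have hder := hdA.unique hdB
    have key : (A.derivative.eval w + A.eval w * U.derivative.eval w)
          * (A.eval w * Complex.exp (U.eval w))
        = (B.derivative.eval w + B.eval w * E.derivative.eval w)
          * (A.eval w * Complex.exp (E.eval w)) := by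
      linear_combination (A.eval w) * hder
    rw [h1 w] at key
    have he : Complex.exp (E.eval w) ≠ 0 := Complex.exp_ne_zero _
    apply mul_right_cancel₀ he
    linear_combination key
  have P1 : (A.derivative + A * U.derivative) * B
      = (B.derivative + B * E.derivative) * A := by
    apply Polynomial.funext
    intro w
    simpa using h2 w
  set H : Polynomial ℂ := E.derivative - U.derivative with hH
  have P2 : A.derivative * B - B.derivative * A = A * B * H := by
    rw [hH]; linear_combination P1
  have hHz : H = 0 := by
    by_contra hne
    have hdegQc : (Q.comp M).natDegree = s := by
      rw [natDegree_comp, hMdeg, mul_one, hQd]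
    have hdegPc : (P.comp M).natDegree = r := by
      rw [natDegree_comp, hMdeg, mul_one, hPd]
    have hdegA : A.natDegree = s + r := by
      rw [hA, natDegree_mul (hcompne Q hQ0) hP0, hdegQc, hPd]
    have hdegB : B.natDegree = s + r := by
      rw [hB, natDegree_mul (mul_ne_zero (C_ne_zero.mpr ha0) hQ0) (hcompne P hP0),
        natDegree_mul (C_ne_zero.mpr ha0) hQ0, natDegree_C, hQd, hdegPc]
      omega
    rcases Nat.eq_zero_or_pos (s + r) with hn | hn
    · have hAd : A.derivative = 0 := by
        rw [eq_C_of_natDegree_eq_zero (by omega : A.natDegree = 0), derivative_C]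
      have hBd : B.derivative = 0 := by
        rw [eq_C_of_natDegree_eq_zero (by omega : B.natDegree = 0), derivative_C]
      rw [hAd, hBd] at P2
      simp only [zero_mul, sub_zero, zero_sub, neg_eq_zero] at P2
      have : A * B * H ≠ 0 := mul_ne_zero (mul_ne_zero hA0 hB0) hne
      exact this P2.symm
    · have hlhs : (A * B * H).natDegree = (s + r) + (s + r) + H.natDegree := by
        rw [natDegree_mul (mul_ne_zero hA0 hB0) hne, natDegree_mul hA0 hB0, hdegA, hdegB]
      have hrhs : (A.derivative * B - B.derivative * A).natDegree
          ≤ (s + r - 1) + (s + r) := by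
        apply le_trans (natDegree_sub_le _ _)
        apply max_le
        · exact le_trans natDegree_mul_le (add_le_add
            (le_trans (natDegree_derivative_le A) (by omega)) (le_of_eq hdegB))
        · exact le_trans natDegree_mul_le (by
            have := natDegree_derivative_le B
            omega)
      rw [P2, hlhs] at hrhs
      omega
  have hUder : U.derivative = E.derivative := by
    have := sub_eq_zero.mp hHz
    exact this.symm
  have hder0 : (U - E).derivative = 0 := by
    rw [derivative_sub, hUder, sub_self]
  have hdeg0 : (U - E).natDegree = 0 := natDegree_eq_zero_of_derivative_eq_zero hder0
  set γ : ℂ := (U - E).coeff 0 with hγdef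
  have hUE : U = E + C γ := by
    have h := eq_C_of_natDegree_eq_zero hdeg0
    rw [sub_eq_iff_eq_add] at h
    rw [h]; ring
  have hEvalT : ∀ w : ℂ, E.eval (a * w + b) = E.eval w + γ := by
    intro w
    have := congrArg (eval w) hUE
    rw [hUeval, eval_add, eval_C] at this
    exact this
  set T : ℂ → ℂ := fun w => a * w + b with hT
  have hTc : T c = c := by
    show a * c + b = c
    rw [hb]; ring
  have hiter : ∀ j : ℕ, E.eval (T^[j] c) = E.eval c + j * γ := by
    intro j
    induction j with
    | zero => simp
    | succ n ih =>
      rw [Function.iterate_succ_apply', hT]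
      show E.eval (a * (T^[n] c) + b) = _
      rw [hEvalT, ih]
      push_cast; ring
  have hγ : γ = 0 := by
    have h := hiter k
    rw [Function.iterate_fixed hTc k] at h
    have hkγ : (k : ℂ) * γ = 0 := by linear_combination -h
    rcases mul_eq_zero.mp hkγ with h' | h'
    · exact absurd h' (Nat.cast_ne_zero.mpr (by omega))
    · exact h'
  have hUeq : U = E := by rw [hUE, hγ, map_zero, add_zero]
  have hAB : A = B := by
    apply Polynomial.funext
    intro w
    have h1w := h1 w
    rw [hUeq] at h1w
    exact mul_right_cancel₀ (Complex.exp_ne_zero _) h1w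
  have hcop : IsCoprime Q P := by
    rw [← EuclideanDomain.gcd_isUnit_iff]
    by_contra hgu
    have hg0 : EuclideanDomain.gcd Q P ≠ 0 := by
      intro h
      exact hQ0 (EuclideanDomain.gcd_eq_zero_iff.mp h).1
    obtain ⟨z, hz⟩ := IsAlgClosed.exists_root (EuclideanDomain.gcd Q P)
      (degree_pos_of_ne_zero_of_nonunit hg0 hgu).ne'
    exact hnocomm z ⟨hz.dvd (EuclideanDomain.gcd_dvd_left Q P),
      hz.dvd (EuclideanDomain.gcd_dvd_right Q P)⟩
  have hAB' : Q.comp M * P = C a * Q * (P.comp M) := by rw [← hA, ← hB]; exact hAB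
  have exQ : ∃ u : ℂ, u ≠ 0 ∧ Q.comp M = C u * Q := by
    have hdvd : Q ∣ Q.comp M := by
      apply hcop.dvd_of_dvd_mul_right
      rw [hAB']
      exact ⟨C a * (P.comp M), by ring⟩
    obtain ⟨t, ht⟩ := hdvd
    have ht0 : t ≠ 0 := by
      intro h; exact hcompne Q hQ0 (by rw [ht, h, mul_zero])
    have htd : t.natDegree = 0 := by
      have h := natDegree_mul hQ0 ht0
      rw [← ht, natDegree_comp, hMdeg, mul_one] at h
      omega
    refine ⟨t.coeff 0, ?_, ?_⟩
    · intro h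
      exact ht0 (by rw [eq_C_of_natDegree_eq_zero htd, h, map_zero])
    · conv_lhs => rw [ht, eq_C_of_natDegree_eq_zero htd]
      ring
  have exP : ∃ u : ℂ, u ≠ 0 ∧ P.comp M = C u * P := by
    have hdvd1 : P ∣ C a * (P.comp M) := by
      apply (hcop.symm).dvd_of_dvd_mul_right
      rw [show C a * (P.comp M) * Q = C a * Q * (P.comp M) by ring, ← hAB']
      exact ⟨Q.comp M, by ring⟩
    obtain ⟨t, ht⟩ := hdvd1
    have hPc : P.comp M = P * (C a⁻¹ * t) := by
      have : P.comp M = C a⁻¹ * (C a * (P.comp M)) := by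
        rw [← mul_assoc, ← C_mul, inv_mul_cancel₀ ha0, C_1, one_mul]
      rw [this, ht]; ring
    have ht0 : C a⁻¹ * t ≠ 0 := by
      intro h
      exact hcompne P hP0 (by rw [hPc, h, mul_zero])
    have htd : (C a⁻¹ * t).natDegree = 0 := by
      have h := natDegree_mul hP0 ht0
      rw [← hPc, natDegree_comp, hMdeg, mul_one] at h
      omega
    refine ⟨(C a⁻¹ * t).coeff 0, ?_, ?_⟩
    · intro h
      exact ht0 (by rw [eq_C_of_natDegree_eq_zero htd, h, map_zero])
    · conv_lhs => rw [hPc, eq_C_of_natDegree_eq_zero htd]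
      ring
  obtain ⟨u, hu, hQc⟩ := exQ
  obtain ⟨v, hv, hPc⟩ := exP
  refine ⟨?_, ?_, ?_⟩
  · have := sum_roots_of_comp hQ0 ha0 ha1 hu hQc
    rw [hQd] at this; exact this
  · have := sum_roots_of_comp hP0 ha0 ha1 hv hPc
    rw [hPd] at this; exact this
  · have hEc : E.comp M = C 1 * E := by rw [C_1, one_mul, ← hU, hUeq]
    have := sum_roots_of_comp hE0 ha0 ha1 one_ne_zero hEc
    rw [hEd] at this; exact this
end
end

section
/- Let s, r ≥ 0 and d ≥ 1 be integers with s + r + d ≥ 2, and let X ∈ E(s,r,d) have data (λ, Q, P, E). If b ∈ ℂ is such that the translation T(w) = w + b leaves X invariant, i.e. Q(w+b)·P(w)·exp(E(w+b)) = Q(w)·P(w+b)·exp(E(w)) for all w ∈ ℂ, then b = 0. In other words, no nontrivial translation leaves an element of E(s,r,d) invariant. -/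
open Polynomial

noncomputable section

/-- If a nonconstant polynomial is invariant under the shift `z ↦ z + b` with `b ≠ 0`,
we get infinitely many roots of an associated polynomial, a contradiction. -/
private lemma shift_natDegree_zero {p : Polynomial ℂ} {b : ℂ} (hb : b ≠ 0)
    (h : ∀ z : ℂ, p.eval (z + b) = p.eval z) : p.natDegree = 0 := by
  by_contra hp
  set q : Polynomial ℂ := p - C (p.eval 0) with hq
  have hq0 : q ≠ 0 := by
    intro h0
    have hpc : p = C (p.eval 0) := by rwa [sub_eq_zero] at h0
    rw [hpc] at hp
    simp at hp
  have hqe : ∀ z : ℂ, q.eval (z + b) = q.eval z := by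
    intro z; simp [hq, h z]
  have hroot : ∀ n : ℕ, q.IsRoot ((n : ℂ) * b) := by
    intro n
    induction n with
    | zero => simp [hq, Polynomial.IsRoot]
    | succ n ih =>
      have hcast : ((n + 1 : ℕ) : ℂ) * b = (n : ℂ) * b + b := by push_cast; ring
      rw [Polynomial.IsRoot, hcast, hqe]
      exact ih
  have hinj : Function.Injective fun n : ℕ => (n : ℂ) * b := by
    intro m n hmn
    simp only at hmn
    exact_mod_cast mul_right_cancel₀ hb hmn
  have hfin := Polynomial.finite_setOf_isRoot hq0
  exact (Set.infinite_of_injective_forall_mem hinj hroot) hfin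

private lemma monic_comp_eq {p : Polynomial ℂ} (hp : p.Monic) {b : ℂ}
    (hdvd : p ∣ p.comp (X + C b)) : p.comp (X + C b) = p :=
  Polynomial.eq_of_monic_of_dvd_of_natDegree_le hp (hp.comp_X_add_C b) hdvd
    (by rw [natDegree_comp, natDegree_X_add_C, mul_one])

/-- no nontrivial translation `T(w) = w + b` leaves an element
of `E(s,r,d)` invariant. -/
theorem stmt15 (s r d : ℕ) (hd : 1 ≤ d) (h2 : 2 ≤ s + r + d)
    (lam : ℂ) (Q P E : Polynomial ℂ) (hX : EData s r d lam Q P E)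
    (b : ℂ)
    (hinv : ∀ w : ℂ,
      Q.eval (w + b) * P.eval w * Complex.exp (E.eval (w + b)) =
        Q.eval w * P.eval (w + b) * Complex.exp (E.eval w)) :
    b = 0 := by
  obtain ⟨hlam, hQ, hP, hs, hr, hE, hroots⟩ := hX
  by_contra hb
  set D : Polynomial ℂ := E.comp (X + C b) - E with hD
  set A : Polynomial ℂ := Q.comp (X + C b) * P with hA
  set B : Polynomial ℂ := Q * P.comp (X + C b) with hB
  have hAev : ∀ w : ℂ, A.eval w = Q.eval (w + b) * P.eval w := by
    intro w; simp [hA, eval_comp]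
  have hBev : ∀ w : ℂ, B.eval w = Q.eval w * P.eval (w + b) := by
    intro w; simp [hB, eval_comp]
  have hDev : ∀ w : ℂ, D.eval w = E.eval (w + b) - E.eval w := by
    intro w; simp [hD, eval_comp]
  have key : ∀ w : ℂ, A.eval w * Complex.exp (D.eval w) = B.eval w := by
    intro w
    have h := hinv w
    have hne := Complex.exp_ne_zero (E.eval w)
    rw [hAev, hBev, hDev, Complex.exp_sub]
    field_simp
    linear_combination h
  have hAm : A.Monic := (hQ.comp_X_add_C b).mul hP
  have hBm : B.Monic := hQ.mul (hP.comp_X_add_C b)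
  by_cases hD' : D.derivative = 0
  · -- `D` is constant
    have hDc : D = C (D.coeff 0) :=
      eq_C_of_natDegree_eq_zero (natDegree_eq_zero_of_derivative_eq_zero hD')
    have hkey2 : ∀ w : ℂ, A.eval w * Complex.exp (D.coeff 0) = B.eval w := by
      intro w
      have hw := key w
      rw [hDc, eval_C] at hw
      exact hw
    have hpoly : A * C (Complex.exp (D.coeff 0)) = B :=
      Polynomial.funext fun w => by simpa using hkey2 w
    have hc1 : Complex.exp (D.coeff 0) = 1 := by
      have hlc := congrArg leadingCoeff hpoly
      rwa [leadingCoeff_mul, hAm.leadingCoeff, hBm.leadingCoeff, one_mul,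
        leadingCoeff_C] at hlc
    have hAB : A = B := by rwa [hc1, map_one, mul_one] at hpoly
    have hcop : IsCoprime Q P := by
      rw [Polynomial.isCoprime_iff_aeval_ne_zero_of_isAlgClosed ℂ ℂ Q P]
      intro a
      have h := hroots a
      rw [not_and_or] at h
      simpa [Polynomial.IsRoot, Polynomial.coe_aeval_eq_eval] using h
    -- `Q` is shift-invariant, hence constant
    have hQd : Q ∣ Q.comp (X + C b) :=
      hcop.dvd_of_dvd_mul_right ⟨P.comp (X + C b), by rw [← hA, ← hB]; exact hAB⟩
    have hQc : Q.comp (X + C b) = Q := monic_comp_eq hQ hQd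
    have hs0 : s = 0 := by
      rw [← hs]
      exact shift_natDegree_zero hb fun z => by
        have := congrArg (eval z) hQc
        simpa [eval_comp] using this
    -- `P` is shift-invariant, hence constant
    have hPd : P ∣ P.comp (X + C b) := by
      refine hcop.symm.dvd_of_dvd_mul_left ⟨Q.comp (X + C b), ?_⟩
      rw [← hB, ← hAB, hA]; ring
    have hPc : P.comp (X + C b) = P := monic_comp_eq hP hPd
    have hr0 : r = 0 := by
      rw [← hr]
      exact shift_natDegree_zero hb fun z => by
        have := congrArg (eval z) hPc
        simpa [eval_comp] using this
    -- `E'` is shift-invariant, hence constant, so `d = 1`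
    have hEcomp : derivative (E.comp (X + C b)) = (derivative E).comp (X + C b) := by
      rw [derivative_comp]; simp
    have hEd : derivative (E.comp (X + C b)) = derivative E := by
      have hder := congrArg derivative hDc
      rw [hD, derivative_sub, derivative_C, sub_eq_zero] at hder
      exact hder
    have hE' : (derivative E).comp (X + C b) = derivative E := by
      rw [← hEcomp, hEd]
    have hd1 : (derivative E).natDegree = 0 :=
      shift_natDegree_zero hb fun z => by
        have := congrArg (eval z) hE'
        simpa [eval_comp] using this
    have hdeq : d = 1 := by
      by_contra hdne
      have hd2 : 2 ≤ d := by omega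
      have hE0 : E ≠ 0 := fun h0 => by simp [h0] at hE; omega
      have hco : (derivative E).coeff (d - 1) ≠ 0 := by
        rw [Polynomial.coeff_derivative]
        have h1 : d - 1 + 1 = d := by omega
        rw [h1]
        have hEc : E.coeff d ≠ 0 := by
          rw [← hE]; exact Polynomial.leadingCoeff_ne_zero.mpr hE0
        refine mul_ne_zero hEc ?_
        have : ((d - 1 : ℕ) : ℂ) + 1 ≠ 0 := by
          exact_mod_cast (Nat.cast_add_one_ne_zero (R := ℂ) (d - 1))
        exact this
      have := Polynomial.le_natDegree_of_ne_zero hco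
      omega
    omega
  · -- `D` is nonconstant: differentiate the functional equation
    have hder : ∀ w : ℂ,
        (A.derivative.eval w + A.eval w * D.derivative.eval w) * Complex.exp (D.eval w) =
          B.derivative.eval w := by
      intro w
      have h1 : HasDerivAt (fun z => A.eval z * Complex.exp (D.eval z))
          (A.derivative.eval w * Complex.exp (D.eval w) +
            A.eval w * (Complex.exp (D.eval w) * D.derivative.eval w)) w :=
        (Polynomial.hasDerivAt A w).mul ((Polynomial.hasDerivAt D w).cexp)
      have h2 : HasDerivAt (fun z => B.eval z) (B.derivative.eval w) w :=
        Polynomial.hasDerivAt B w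
      have hfun : (fun z => A.eval z * Complex.exp (D.eval z)) = fun z => B.eval z :=
        funext key
      rw [hfun] at h1
      have huniq := h1.unique h2
      rw [← huniq]; ring
    have hpoly : A.derivative * B + A * B * D.derivative = B.derivative * A := by
      apply Polynomial.funext
      intro w
      have h1 := hder w
      have h2 := key w
      simp only [eval_add, eval_mul]
      rw [← h2]
      linear_combination A.eval w * h1
    have hA0 : A ≠ 0 := hAm.ne_zero
    have hB0 : B ≠ 0 := hBm.ne_zero
    have hL0 : A * B * D.derivative ≠ 0 := mul_ne_zero (mul_ne_zero hA0 hB0) hD'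
    have hLdeg : A.natDegree + B.natDegree ≤ (A * B * D.derivative).natDegree := by
      rw [natDegree_mul (mul_ne_zero hA0 hB0) hD', natDegree_mul hA0 hB0]
      omega
    have hLR : A * B * D.derivative = B.derivative * A - A.derivative * B := by
      linear_combination hpoly
    by_cases hAB0 : A.natDegree = 0 ∧ B.natDegree = 0
    · apply hL0
      rw [hLR, derivative_of_natDegree_zero hAB0.1, derivative_of_natDegree_zero hAB0.2]
      ring
    · have hbound : ∀ p q : Polynomial ℂ,
          (p.derivative * q).natDegree ≤ p.natDegree + q.natDegree - 1 := by
        intro p q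
        by_cases hp' : p.derivative = 0
        · simp [hp']
        · have hpn : p.natDegree ≠ 0 := fun h => hp' (derivative_of_natDegree_zero h)
          calc (p.derivative * q).natDegree ≤ p.derivative.natDegree + q.natDegree :=
                natDegree_mul_le
            _ ≤ (p.natDegree - 1) + q.natDegree :=
                Nat.add_le_add_right (Polynomial.natDegree_derivative_le p) _
            _ ≤ p.natDegree + q.natDegree - 1 := by omega
      have hRdeg : (B.derivative * A - A.derivative * B).natDegree ≤
          A.natDegree + B.natDegree - 1 := by
        refine (Polynomial.natDegree_sub_le _ _).trans (max_le ?_ ?_)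
        · have := hbound B A; omega
        · exact hbound A B
      rw [← hLR] at hRdeg
      have h1 : 1 ≤ A.natDegree + B.natDegree := by omega
      omega
end
end

section
/- Let s, r ≥ 0 and d ≥ 1 be integers, let k ≥ 2, let a be a primitive k-th root of unity, and suppose X ∈ E(s,r,d) with data (λ, Q, P, E) is left invariant by the rotation T(w) = a·w (of order k about C = 0), and that 0 is a root of P of multiplicity ν ≥ 1 (a pole of X). Then k | s, k | d, k | (ν + 1), and there exist λ' ∈ ℂ \ {0}, monic polynomials Q', P' ∈ ℂ[w] with no common roots, deg Q' = s/k and deg P' = (r+1)/k − 1, and a polynomial E' ∈ ℂ[w] with deg E' = d/k, such that k·z^{k−1}·λ·Q(z)·exp(E(z))·P'(z^k) = λ'·Q'(z^k)·exp(E'(z^k))·P(z) for all z ∈ ℂ; that is, the pushforward of X under z ↦ z^k is the element of E(s/k, (r+1)/k − 1, d/k) with data (λ', Q', P', E'). -/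
open Polynomial

noncomputable section

lemma coeff_comp_CaX (p : ℂ[X]) (a : ℂ) (n : ℕ) :
    (p.comp (C a * X)).coeff n = a ^ n * p.coeff n := by
  induction p using Polynomial.induction_on' with
  | add p q hp hq => simp [add_comp, hp, hq, mul_add]
  | monomial i c =>
      rw [monomial_comp, mul_pow, ← C_pow]
      rw [show C c * (C (a ^ i) * X ^ i) = C (c * a ^ i) * X ^ i by rw [C_mul]; ring]
      rw [coeff_C_mul, coeff_X_pow, coeff_monomial]
      by_cases h : i = n
      · subst h; simp [mul_comm]
      · simp only [if_neg h, if_neg (fun hc : n = i => h hc.symm)]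
        ring

lemma expand_contract_of_dvd {k : ℕ} (hk : k ≠ 0) (p : ℂ[X])
    (h : ∀ n, p.coeff n ≠ 0 → k ∣ n) :
    expand ℂ k (Polynomial.contract k p) = p := by
  ext n
  rw [coeff_expand hk.bot_lt]
  split_ifs with h'
  · rw [Polynomial.coeff_contract hk, Nat.div_mul_cancel h']
  · by_contra hne
    exact h' (h n (by intro h0; exact hne (by rw [h0])))

lemma deriv_zero_of_exp_eq (A B F : ℂ[X]) (hA : A ≠ 0)
    (h : ∀ w : ℂ, A.eval w * Complex.exp (F.eval w) = B.eval w) :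
    F.derivative = 0 := by
  by_contra hF
  have hB : B ≠ 0 := by
    intro hB0
    apply hA
    apply Polynomial.funext
    intro w
    have := h w
    rw [hB0] at this
    simp only [eval_zero] at this ⊢
    exact (mul_eq_zero.mp this).resolve_right (Complex.exp_ne_zero _)
  have hder : ∀ w : ℂ, (A.derivative.eval w + A.eval w * F.derivative.eval w) *
      Complex.exp (F.eval w) = B.derivative.eval w := by
    intro w
    have hd1 : HasDerivAt (fun z : ℂ => A.eval z * Complex.exp (F.eval z))
        (A.derivative.eval w * Complex.exp (F.eval w) +
          A.eval w * (Complex.exp (F.eval w) * F.derivative.eval w)) w :=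
      (A.hasDerivAt w).mul ((F.hasDerivAt w).cexp)
    have hd2 : HasDerivAt (fun z : ℂ => A.eval z * Complex.exp (F.eval z))
        (B.derivative.eval w) w := by
      have he : (fun z : ℂ => A.eval z * Complex.exp (F.eval z)) = fun z => B.eval z :=
        funext h
      rw [he]
      exact B.hasDerivAt w
    have := hd1.unique hd2
    linear_combination this
  have hpoly : (A.derivative + A * F.derivative) * B = B.derivative * A := by
    apply Polynomial.funext
    intro w
    simp only [eval_mul, eval_add]
    rw [← h w, ← hder w]
    ring
  have key : A * F.derivative * B = B.derivative * A - A.derivative * B := by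
    linear_combination hpoly
  have hAbot : A.degree ≠ ⊥ := fun h' => hA (degree_eq_bot.mp h')
  have hBbot : B.degree ≠ ⊥ := fun h' => hB (degree_eq_bot.mp h')
  have hlt : (B.derivative * A - A.derivative * B).degree < A.degree + B.degree := by
    refine lt_of_le_of_lt (degree_sub_le _ _) (max_lt ?_ ?_)
    · rw [degree_mul, add_comm A.degree B.degree]
      exact WithBot.add_lt_add_right hAbot (degree_derivative_lt hB)
    · rw [degree_mul]
      exact WithBot.add_lt_add_right hBbot (degree_derivative_lt hA)
  have hge : A.degree + B.degree ≤ (A * F.derivative * B).degree := by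
    rw [degree_mul, degree_mul]
    have h0 : (0 : WithBot ℕ) ≤ F.derivative.degree := zero_le_degree_iff.mpr hF
    calc A.degree + B.degree = A.degree + 0 + B.degree := by rw [add_zero]
      _ ≤ A.degree + F.derivative.degree + B.degree :=
        add_le_add_left (add_le_add_right h0 _) _
  rw [key] at hge
  exact absurd (lt_of_le_of_lt hge hlt) (lt_irrefl _)

/-- if `X ∈ E(s,r,d)` is invariant under the rotation
`T(w) = a·w` of order `k ≥ 2` about `0`, and `0` is a pole of `X` of
multiplicity `ν ≥ 1`, then `k ∣ s`, `k ∣ d`, `k ∣ (ν+1)`, and the pushforward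
of `X` under `z ↦ z^k` is an element of `E(s/k, (r+1)/k − 1, d/k)`. -/
theorem stmt16 (s r d : ℕ) (hd : 1 ≤ d)
    (lam : ℂ) (Q P E : Polynomial ℂ) (hX : EData s r d lam Q P E)
    (k : ℕ) (hk : 2 ≤ k) (a : ℂ) (hprim : IsPrimitiveRoot a k)
    (hinv : LeavesInv Q P E a 0)
    (hν : 1 ≤ P.rootMultiplicity 0) :
    k ∣ s ∧ k ∣ d ∧ k ∣ (P.rootMultiplicity 0 + 1) ∧
    ∃ (lam' : ℂ) (Q' P' E' : Polynomial ℂ),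
      lam' ≠ 0 ∧ Q'.Monic ∧ P'.Monic ∧
      (∀ z : ℂ, ¬ (Q'.IsRoot z ∧ P'.IsRoot z)) ∧
      Q'.natDegree = s / k ∧ P'.natDegree = (r + 1) / k - 1 ∧
      E'.natDegree = d / k ∧
      ∀ z : ℂ,
        (k : ℂ) * z ^ (k - 1) * lam * Q.eval z * Complex.exp (E.eval z) *
            P'.eval (z ^ k) =
          lam' * Q'.eval (z ^ k) * Complex.exp (E'.eval (z ^ k)) * P.eval z := by
  obtain ⟨hlam, hQm, hPm, hQd, hPd, hEd, hcop⟩ := hX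
  have hk0 : k ≠ 0 := by omega
  have ha0 : a ≠ 0 := by
    intro h0
    have := hprim.pow_eq_one
    rw [h0, zero_pow hk0] at this
    exact zero_ne_one this
  have hPne : P ≠ 0 := hPm.ne_zero
  have hQne : Q ≠ 0 := hQm.ne_zero
  have hν' : 1 ≤ P.natTrailingDegree := by
    rwa [rootMultiplicity_eq_natTrailingDegree'] at hν
  have hroot0 : P.coeff 0 = 0 := coeff_eq_zero_of_lt_natTrailingDegree (by omega)
  have hQ0 : Q.coeff 0 ≠ 0 := by
    intro h0
    exact hcop 0 ⟨by rwa [IsRoot.def, ← coeff_zero_eq_eval_zero],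
      by rw [IsRoot.def, ← coeff_zero_eq_eval_zero]; exact hroot0⟩
  have hfun : ∀ w : ℂ, (Q.comp (C a * X) * P).eval w *
      Complex.exp ((E.comp (C a * X) - E).eval w) =
      (C a * (Q * P.comp (C a * X))).eval w := by
    intro w
    have hiv := hinv w
    simp only [add_zero] at hiv
    simp only [eval_mul, eval_sub, eval_comp, eval_C, eval_X]
    apply mul_right_cancel₀ (Complex.exp_ne_zero (E.eval w))
    have hexp : Complex.exp (E.eval (a * w) - E.eval w) * Complex.exp (E.eval w) =
        Complex.exp (E.eval (a * w)) := by
      rw [← Complex.exp_add]; ring_nf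
    rw [mul_assoc, hexp]
    linear_combination hiv
  have hQcne : Q.comp (C a * X) ≠ 0 := by
    intro hc
    have h1 : (Q.comp (C a * X)).coeff s = a ^ s * Q.coeff s := coeff_comp_CaX Q a s
    rw [hc, coeff_zero] at h1
    have h2 : Q.coeff s = 1 := by rw [← hQd]; exact hQm.coeff_natDegree
    rw [h2, mul_one] at h1
    exact pow_ne_zero s ha0 h1.symm
  have hAne : Q.comp (C a * X) * P ≠ 0 := mul_ne_zero hQcne hPne
  have hFder : (E.comp (C a * X) - E).derivative = 0 :=
    deriv_zero_of_exp_eq _ _ _ hAne hfun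
  have hF0 : (E.comp (C a * X) - E).coeff 0 = 0 := by
    rw [coeff_sub, coeff_comp_CaX, pow_zero, one_mul, sub_self]
  have hE : E.comp (C a * X) = E := by
    have h1 : E.comp (C a * X) - E = 0 := by
      rw [eq_C_of_derivative_eq_zero hFder, hF0, map_zero]
    exact sub_eq_zero.mp h1
  have hABeq : Q.comp (C a * X) * P = C a * (Q * P.comp (C a * X)) := by
    apply Polynomial.funext
    intro w
    have h1 := hfun w
    rwa [hE, sub_self, eval_zero, Complex.exp_zero, mul_one] at h1
  have hcp : IsCoprime Q P := by
    rw [Polynomial.isCoprime_iff_aeval_ne_zero_of_isAlgClosed (k := ℂ) ℂ Q P]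
    intro z
    rcases not_and_or.mp (hcop z) with h | h
    · left; simpa using h
    · right; simpa using h
  have hQcomp : Q.comp (C a * X) = Q * C (a ^ s) := by
    have hdvd : Q ∣ Q.comp (C a * X) := by
      refine hcp.dvd_of_dvd_mul_right ?_
      exact ⟨C a * P.comp (C a * X), by rw [hABeq]; ring⟩
    obtain ⟨u, hu⟩ := hdvd
    have hune : u ≠ 0 := by
      rintro rfl
      rw [mul_zero] at hu
      exact hQcne hu
    have hdeg : (Q.comp (C a * X)).natDegree = s := by
      rw [natDegree_comp, natDegree_C_mul_X a ha0, mul_one, hQd]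
    have hu0 : u.natDegree = 0 := by
      have h1 := natDegree_mul hQne hune
      rw [← hu, hdeg, hQd] at h1
      omega
    have hcoeffs : (Q.comp (C a * X)).coeff s = a ^ s := by
      rw [coeff_comp_CaX, ← hQd, hQm.coeff_natDegree, mul_one]
    rw [hu, eq_C_of_natDegree_eq_zero hu0] at hcoeffs ⊢
    rw [coeff_mul_C, ← hQd, hQm.coeff_natDegree, one_mul] at hcoeffs
    rw [hcoeffs, hQd]
  have has1 : a ^ s = 1 := by
    have h1 := coeff_comp_CaX Q a 0
    rw [hQcomp, coeff_mul_C, pow_zero, one_mul] at h1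
    have h2 : Q.coeff 0 * a ^ s = Q.coeff 0 * 1 := by rw [mul_one]; exact h1
    exact mul_left_cancel₀ hQ0 h2
  have hks : k ∣ s := hprim.dvd_of_pow_eq_one s has1
  have hQdvd : ∀ n, Q.coeff n ≠ 0 → k ∣ n := by
    intro n hn
    apply hprim.dvd_of_pow_eq_one
    have h1 := coeff_comp_CaX Q a n
    rw [hQcomp, coeff_mul_C, has1, mul_one] at h1
    have h2 : a ^ n * Q.coeff n = 1 * Q.coeff n := by rw [one_mul]; exact h1.symm
    exact mul_right_cancel₀ hn h2
  have hPcomp : P.comp (C a * X) = C a⁻¹ * P := by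
    have h1 : Q * (C (a ^ s) * P) = Q * (C a * P.comp (C a * X)) := by
      linear_combination hABeq - hQcomp * P
    have h2 := mul_left_cancel₀ hQne h1
    rw [has1, map_one, one_mul] at h2
    calc P.comp (C a * X) = C a⁻¹ * (C a * P.comp (C a * X)) := by
          rw [← mul_assoc, ← C_mul, inv_mul_cancel₀ ha0, map_one, one_mul]
      _ = C a⁻¹ * P := by rw [← h2]
  have hPdvd : ∀ n, P.coeff n ≠ 0 → k ∣ (n + 1) := by
    intro n hn
    apply hprim.dvd_of_pow_eq_one
    have h1 := coeff_comp_CaX P a n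
    rw [hPcomp, coeff_C_mul] at h1
    have h2 : a * (a ^ n * P.coeff n) = a * (a⁻¹ * P.coeff n) := by rw [h1]
    rw [← mul_assoc, ← mul_assoc, mul_inv_cancel₀ ha0, one_mul] at h2
    have h3 : a ^ (n + 1) * P.coeff n = 1 * P.coeff n := by
      rw [one_mul, pow_succ]
      linear_combination h2
    exact mul_right_cancel₀ hn h3
  have htc : P.coeff P.natTrailingDegree ≠ 0 := by
    have h1 : P.trailingCoeff ≠ 0 := fun h => hPne (trailingCoeff_eq_zero.mp h)
    simpa [Polynomial.trailingCoeff] using h1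
  have hkν : k ∣ (P.natTrailingDegree + 1) := hPdvd _ htc
  have hEne : E ≠ 0 := fun h => by rw [h, natDegree_zero] at hEd; omega
  have hEdvd : ∀ n, E.coeff n ≠ 0 → k ∣ n := by
    intro n hn
    apply hprim.dvd_of_pow_eq_one
    have h1 := coeff_comp_CaX E a n
    rw [hE] at h1
    have h2 : a ^ n * E.coeff n = 1 * E.coeff n := by rw [one_mul]; exact h1.symm
    exact mul_right_cancel₀ hn h2
  have hkd : k ∣ d := by
    refine hEdvd d ?_
    rw [← hEd]
    exact fun h => hEne (leadingCoeff_eq_zero.mp h)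
  -- constructions
  have hQ'exp : expand ℂ k (Polynomial.contract k Q) = Q :=
    expand_contract_of_dvd hk0 Q hQdvd
  have hE'exp : expand ℂ k (Polynomial.contract k E) = E :=
    expand_contract_of_dvd hk0 E hEdvd
  have hXPdvd : ∀ n, (X * P).coeff n ≠ 0 → k ∣ n := by
    intro n hn
    cases n with
    | zero => exact absurd (by simp [mul_coeff_zero]) hn
    | succ m =>
        rw [coeff_X_mul] at hn
        exact hPdvd m hn
  have hSexp : expand ℂ k (Polynomial.contract k (X * P)) = X * P :=
    expand_contract_of_dvd hk0 _ hXPdvd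
  have hS0 : (Polynomial.contract k (X * P)).coeff 0 = 0 := by
    rw [Polynomial.coeff_contract hk0, zero_mul]
    simp [mul_coeff_zero]
  have hSfac : Polynomial.contract k (X * P) = (Polynomial.contract k (X * P)).divX * X := by
    have h1 := (Polynomial.contract k (X * P)).divX_mul_X_add
    rw [hS0, map_zero, add_zero] at h1
    exact h1.symm
  have hPfac : P = X ^ (k - 1) * expand ℂ k (Polynomial.contract k (X * P)).divX := by
    refine mul_left_cancel₀ (X_ne_zero (R := ℂ)) ?_
    conv_lhs => rw [← hSexp, hSfac, map_mul, expand_X]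
    rw [show (X : ℂ[X]) ^ k = X * X ^ (k - 1) by rw [← pow_succ']; congr 1; omega]
    ring
  have hXPne : (X : ℂ[X]) * P ≠ 0 := mul_ne_zero X_ne_zero hPne
  have hSne : Polynomial.contract k (X * P) ≠ 0 := by
    intro h0
    rw [h0, map_zero] at hSexp
    exact hXPne hSexp.symm
  have hP'ne : (Polynomial.contract k (X * P)).divX ≠ 0 := by
    intro h0
    rw [h0, zero_mul] at hSfac
    exact hSne hSfac
  have hSdeg : (Polynomial.contract k (X * P)).natDegree * k = r + 1 := by
    have h1 := natDegree_expand k (Polynomial.contract k (X * P))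
    rw [hSexp, natDegree_mul (X_ne_zero (R := ℂ)) hPne, natDegree_X, hPd] at h1
    omega
  have hSmonic : (Polynomial.contract k (X * P)).leadingCoeff = 1 := by
    have h1 := leadingCoeff_expand (p := k) (f := Polynomial.contract k (X * P))
      (by omega : 0 < k)
    rw [hSexp] at h1
    rw [← h1]
    exact (monic_X.mul hPm)
  have hP'monic : (Polynomial.contract k (X * P)).divX.Monic := by
    have h1 : (Polynomial.contract k (X * P)).leadingCoeff =
        (Polynomial.contract k (X * P)).divX.leadingCoeff := by
      conv_lhs => rw [hSfac]
      rw [leadingCoeff_mul, leadingCoeff_X, mul_one]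
    exact show _ = (1 : ℂ) from h1 ▸ hSmonic
  have hP'deg : (Polynomial.contract k (X * P)).divX.natDegree = (r + 1) / k - 1 := by
    have h1 : (Polynomial.contract k (X * P)).natDegree =
        (Polynomial.contract k (X * P)).divX.natDegree + 1 := by
      conv_lhs => rw [hSfac]
      rw [natDegree_mul hP'ne (X_ne_zero (R := ℂ)), natDegree_X]
    have h2 : (r + 1) / k = (Polynomial.contract k (X * P)).natDegree := by
      rw [← hSdeg, Nat.mul_div_cancel _ (by omega : 0 < k)]
    omega
  have hQ'deg : (Polynomial.contract k Q).natDegree = s / k := by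
    have h1 := natDegree_expand k (Polynomial.contract k Q)
    rw [hQ'exp, hQd] at h1
    rw [h1, Nat.mul_div_cancel _ (by omega : 0 < k)]
  have hQ'monic : (Polynomial.contract k Q).Monic := by
    have h1 := leadingCoeff_expand (p := k) (f := Polynomial.contract k Q)
      (by omega : 0 < k)
    rw [hQ'exp] at h1
    exact show _ = (1 : ℂ) from h1 ▸ hQm
  have hE'deg : (Polynomial.contract k E).natDegree = d / k := by
    have h1 := natDegree_expand k (Polynomial.contract k E)
    rw [hE'exp, hEd] at h1
    rw [h1, Nat.mul_div_cancel _ (by omega : 0 < k)]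
  have hQev : ∀ z : ℂ, Q.eval z = (Polynomial.contract k Q).eval (z ^ k) := by
    intro z
    conv_lhs => rw [← hQ'exp]
    rw [expand_eval]
  have hEev : ∀ z : ℂ, E.eval z = (Polynomial.contract k E).eval (z ^ k) := by
    intro z
    conv_lhs => rw [← hE'exp]
    rw [expand_eval]
  have hPev : ∀ z : ℂ, P.eval z =
      z ^ (k - 1) * (Polynomial.contract k (X * P)).divX.eval (z ^ k) := by
    intro z
    conv_lhs => rw [hPfac]
    rw [eval_mul, eval_pow, eval_X, expand_eval]
  have hnoroot : ∀ z : ℂ, ¬ ((Polynomial.contract k Q).IsRoot z ∧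
      (Polynomial.contract k (X * P)).divX.IsRoot z) := by
    rintro z ⟨h1, h2⟩
    obtain ⟨w, hw⟩ := IsAlgClosed.exists_pow_nat_eq z (show 0 < k by omega)
    refine hcop w ⟨?_, ?_⟩
    · rw [IsRoot.def, hQev w, hw]
      exact h1
    · rw [IsRoot.def] at h2
      rw [IsRoot.def, hPev w, hw, h2, mul_zero]
  refine ⟨hks, hkd, by rw [rootMultiplicity_eq_natTrailingDegree']; exact hkν,
    (k : ℂ) * lam, Polynomial.contract k Q, (Polynomial.contract k (X * P)).divX,
    Polynomial.contract k E,
    mul_ne_zero (Nat.cast_ne_zero.mpr hk0) hlam, hQ'monic, hP'monic, hnoroot,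
    hQ'deg, hP'deg, hE'deg, ?_⟩
  intro z
  rw [hQev z, hEev z]
  conv_rhs => rw [hPev z]
  ring
end
end

section
/- Let r ≥ 1 and let X ∈ E(0,r,0) have data (λ, P). A nontrivial affine map T(w) = a·w + b leaves X invariant if and only if a^{r+1} = 1 and P(a·w+b) = a^r·P(w) as polynomials. In that case a ≠ 1, a is a primitive k-th root of unity for some k ≥ 2 with k | (r + 1), and the fixed point C = b/(1 − a) of T is a root of P of multiplicity ν ≥ 1 with k | (ν + 1). -/
open Polynomial

noncomputable section

/-- for the rational family `E(0,r,0)` with data `(λ, P)`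
(`X = (λ/P(z)) ∂/∂z`, `P` monic of degree `r ≥ 1`), a nontrivial affine map
`T(w) = a·w + b` leaves `X` invariant (i.e. `P(w) = a·P(aw+b)` for all `w`)
iff `a^(r+1) = 1` and `P(aw+b) = a^r·P(w)` as polynomials; in that case
`a ≠ 1`, `a` is a primitive `k`-th root of unity for some `k ≥ 2` with
`k ∣ (r+1)`, and `C = b/(1−a)` is a root of `P` of multiplicity `ν ≥ 1`
with `k ∣ (ν+1)`. -/
theorem stmt18 (r : ℕ) (hr : 1 ≤ r)
    (lam : ℂ) (hlam : lam ≠ 0)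
    (P : Polynomial ℂ) (hP : P.Monic) (hPdeg : P.natDegree = r)
    (a b : ℂ) (ha : a ≠ 0) (hnt : (a, b) ≠ (1, 0)) :
    ((∀ w : ℂ, P.eval w = a * P.eval (a * w + b)) ↔
      (a ^ (r + 1) = 1 ∧ P.comp (C a * X + C b) = C (a ^ r) * P)) ∧
    ((∀ w : ℂ, P.eval w = a * P.eval (a * w + b)) →
      a ≠ 1 ∧ ∃ k : ℕ, 2 ≤ k ∧ IsPrimitiveRoot a k ∧ k ∣ (r + 1) ∧
        1 ≤ P.rootMultiplicity (b / (1 - a)) ∧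
        k ∣ (P.rootMultiplicity (b / (1 - a)) + 1)) := by
  have hP0 : P ≠ 0 := hP.ne_zero
  -- forward direction of the iff
  have fwd : (∀ w : ℂ, P.eval w = a * P.eval (a * w + b)) →
      a ^ (r + 1) = 1 ∧ P.comp (C a * X + C b) = C (a ^ r) * P := by
    intro h
    have hPeq : P = C a * P.comp (C a * X + C b) := by
      apply Polynomial.funext
      intro w
      simp [eval_comp, ← h w]
    have hlc : (P.comp (C a * X + C b)).leadingCoeff = a ^ r := by
      rw [leadingCoeff_comp (by rw [natDegree_linear ha]; norm_num),
        leadingCoeff_linear ha, hP.leadingCoeff, one_mul, hPdeg]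
    have h1 : a ^ (r + 1) = 1 := by
      have := congrArg leadingCoeff hPeq
      rw [hP.leadingCoeff, leadingCoeff_mul, leadingCoeff_C, hlc] at this
      rw [pow_succ]
      linear_combination -this
    refine ⟨h1, ?_⟩
    calc P.comp (C a * X + C b)
        = C (a ^ (r + 1)) * P.comp (C a * X + C b) := by rw [h1, map_one, one_mul]
      _ = C (a ^ r) * (C a * P.comp (C a * X + C b)) := by
          rw [pow_succ, map_mul]; ring
      _ = C (a ^ r) * P := by rw [← hPeq]
  constructor
  · refine ⟨fwd, ?_⟩
    rintro ⟨h1, h2⟩ w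
    have := congrArg (eval w) h2
    simp only [eval_comp, eval_mul, eval_add, eval_C, eval_X] at this
    rw [this]
    linear_combination (-P.eval w) * h1
  · intro h
    obtain ⟨h1, h2⟩ := fwd h
    have ha1 : a ≠ 1 := by
      rintro rfl
      have hb : b ≠ 0 := by simpa using hnt
      have key : ∀ n : ℕ, P.eval (n * b) = P.eval 0 := by
        intro n
        induction n with
        | zero => simp
        | succ n ih =>
          have hcast : ((n + 1 : ℕ) : ℂ) * b = (n : ℂ) * b + b := by push_cast; ring
          have h' := h ((n : ℂ) * b)
          simp only [one_mul] at h'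
          rw [hcast, ← h', ih]
      have hinf : {x : ℂ | (P - C (P.eval 0)).IsRoot x}.Infinite := by
        apply Set.infinite_of_injective_forall_mem (f := fun n : ℕ => (n : ℂ) * b)
        · intro m n hmn
          have : (m : ℂ) = n := mul_right_cancel₀ hb hmn
          exact_mod_cast this
        · intro n
          simp [IsRoot, key n]
      have := Polynomial.eq_zero_of_infinite_isRoot _ hinf
      have hPC : P = C (P.eval 0) := by linear_combination this
      have : P.natDegree = 0 := by rw [hPC]; simp
      omega
    set c : ℂ := b / (1 - a) with hc
    have h1a : (1 : ℂ) - a ≠ 0 := sub_ne_zero.mpr (Ne.symm ha1)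
    have hfix : a * c + b = c := by
      have hc' : (1 - a) * c = b := by rw [hc]; field_simp
      linear_combination -hc'
    -- c is a root of P
    have hroot : P.eval c = 0 := by
      have hh := h c
      rw [hfix] at hh
      have : (1 - a) * P.eval c = 0 := by linear_combination hh
      rcases mul_eq_zero.mp this with h' | h'
      · exact absurd h' h1a
      · exact h'
    have hν1 : 1 ≤ P.rootMultiplicity c :=
      (rootMultiplicity_pos hP0).mpr hroot
    set ν := P.rootMultiplicity c with hνdef
    -- the key power identity a ^ (ν + 1) = 1
    obtain ⟨Q, hQeq, hQnd⟩ := P.exists_eq_pow_rootMultiplicity_mul_and_not_dvd hP0 c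
    rw [← hνdef] at hQeq
    have hQc : Q.eval c ≠ 0 := fun hz => hQnd (dvd_iff_isRoot.mpr hz)
    have hlin : (X - Polynomial.C c).comp (C a * X + C b) = C a * (X - C c) := by
      have hbc : b - c = -(a * c) := by linear_combination hfix
      rw [sub_comp, X_comp, C_comp]
      calc C a * X + C b - C c = C a * X + C (b - c) := by rw [C_sub, add_sub_assoc]
        _ = C a * X - C (a * c) := by rw [hbc, map_neg, ← sub_eq_add_neg]
        _ = C a * (X - C c) := by rw [mul_sub, C_mul]
    have h2' : (X - Polynomial.C c) ^ ν * (C (a ^ ν) * Q.comp (C a * X + C b)) =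
        (X - Polynomial.C c) ^ ν * (C (a ^ r) * Q) := by
      have hthis := h2
      rw [hQeq, mul_comp, pow_comp, hlin, mul_pow, ← C_pow] at hthis
      linear_combination hthis
    have h2'' : C (a ^ ν) * Q.comp (C a * X + C b) = C (a ^ r) * Q :=
      mul_left_cancel₀ (pow_ne_zero ν (X_sub_C_ne_zero c)) h2'
    have hevc := congrArg (eval c) h2''
    simp only [eval_mul, eval_C, eval_comp, eval_add, eval_mul, eval_X] at hevc
    rw [hfix] at hevc
    have hpow : a ^ ν = a ^ r := by
      have : (a ^ ν - a ^ r) * Q.eval c = 0 := by linear_combination hevc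
      rcases mul_eq_zero.mp this with h' | h'
      · linear_combination h'
      · exact absurd h' hQc
    have hν : a ^ (ν + 1) = 1 := by
      rw [pow_succ, hpow, ← pow_succ, h1]
    -- order of a
    have hfin : IsOfFinOrder a := isOfFinOrder_iff_pow_eq_one.mpr ⟨r + 1, by omega, h1⟩
    have hk0 : 0 < orderOf a := hfin.orderOf_pos
    have hk1 : orderOf a ≠ 1 := fun hk => ha1 (orderOf_eq_one_iff.mp hk)
    refine ⟨ha1, orderOf a, by omega, ⟨pow_orderOf_eq_one a, fun l hl => orderOf_dvd_of_pow_eq_one hl⟩,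
      orderOf_dvd_of_pow_eq_one h1, hν1, orderOf_dvd_of_pow_eq_one hν⟩
end
end

section
/- Let s ≥ 2 and let X ∈ E(s,0,0) have data (λ, Q). A nontrivial affine map T(w) = a·w + b leaves X invariant if and only if a^{s−1} = 1, a ≠ 1, and Q(a·w+b) = a^s·Q(w) as polynomials. In that case a is a primitive k-th root of unity for some k ≥ 2 with k | (s − 1), and the fixed point C = b/(1 − a) of T is a root of Q of multiplicity ν ≥ 1 with k | (ν − 1). -/
open Polynomial

noncomputable section

lemma aux_b_eq_zero (Q : Polynomial ℂ) (hQ0 : Q ≠ 0) (hdeg : 0 < Q.degree)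
    (b : ℂ) (H : ∀ w : ℂ, Q.eval (w + b) = Q.eval w) : b = 0 := by
  by_contra hb
  obtain ⟨r, hr⟩ := Complex.exists_root hdeg
  have hroot : ∀ n : ℕ, (fun n : ℕ => r + n * b) n ∈ {x : ℂ | Q.IsRoot x} := by
    intro n
    induction n with
    | zero => simpa using hr
    | succ n ih =>
      have h1 : r + ((n : ℂ) + 1) * b = (r + n * b) + b := by ring
      simp only [Set.mem_setOf_eq, IsRoot] at ih ⊢
      push_cast
      rw [h1, H]
      exact ih
  have hinj : Function.Injective (fun n : ℕ => r + n * b) := by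
    intro m n h
    simp only [add_right_inj] at h
    have : (m : ℂ) = n := mul_right_cancel₀ hb h
    exact_mod_cast this
  exact (Polynomial.finite_setOf_isRoot hQ0).not_infinite
    (Set.infinite_of_injective_forall_mem hinj hroot)

theorem stmt19 (s : ℕ) (hs : 2 ≤ s)
    (lam : ℂ) (hlam : lam ≠ 0)
    (Q : Polynomial ℂ) (hQ : Q.Monic) (hQdeg : Q.natDegree = s)
    (a b : ℂ) (ha : a ≠ 0) (hnt : (a, b) ≠ (1, 0)) :
    ((∀ w : ℂ, Q.eval (a * w + b) = a * Q.eval w) ↔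
      (a ^ (s - 1) = 1 ∧ a ≠ 1 ∧
        Q.comp (C a * X + C b) = C (a ^ s) * Q)) ∧
    ((∀ w : ℂ, Q.eval (a * w + b) = a * Q.eval w) →
      ∃ k : ℕ, 2 ≤ k ∧ IsPrimitiveRoot a k ∧ k ∣ (s - 1) ∧
        1 ≤ Q.rootMultiplicity (b / (1 - a)) ∧
        k ∣ (Q.rootMultiplicity (b / (1 - a)) - 1)) := by
  have hQ0 : Q ≠ 0 := hQ.ne_zero
  have hs1 : 1 ≤ s := le_trans one_le_two hs
  have hdegpos : 0 < Q.degree := natDegree_pos_iff_degree_pos.mp (by omega)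
  -- forward key facts
  have hfwd : (∀ w : ℂ, Q.eval (a * w + b) = a * Q.eval w) →
      a ^ (s - 1) = 1 ∧ a ≠ 1 := by
    intro H
    have hpoly : Q.comp (C a * X + C b) = C a * Q := by
      apply Polynomial.funext
      intro w
      simp [eval_comp, H w]
    have hlead : a ^ s = a := by
      have h1 := congrArg leadingCoeff hpoly
      rw [Polynomial.leadingCoeff_comp (by rw [natDegree_linear ha]; norm_num)] at h1
      rw [leadingCoeff_linear ha, hQ.leadingCoeff, one_mul, hQdeg] at h1
      rw [h1, leadingCoeff_mul, leadingCoeff_C, hQ.leadingCoeff, mul_one]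
    have hane : a ≠ 1 := by
      intro h1
      subst h1
      have hb : b ≠ 0 := by
        intro h2
        exact hnt (by simp [h2])
      exact hb (aux_b_eq_zero Q hQ0 hdegpos b (fun w => by simpa using H w))
    refine ⟨?_, hane⟩
    have h2 : a ^ (s - 1) * a = 1 * a := by
      rw [one_mul, ← pow_succ, Nat.sub_add_cancel hs1]
      exact hlead
    exact mul_right_cancel₀ ha h2
  constructor
  · constructor
    · intro H
      obtain ⟨h1, h2⟩ := hfwd H
      refine ⟨h1, h2, ?_⟩
      have has : a ^ s = a := by
        calc a ^ s = a ^ (s - 1) * a := by rw [← pow_succ, Nat.sub_add_cancel hs1]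
        _ = a := by rw [h1, one_mul]
      rw [has]
      apply Polynomial.funext
      intro w
      simp [eval_comp, H w]
    · rintro ⟨h1, _, h3⟩ w
      have := congrArg (eval w) h3
      simp only [eval_comp, eval_add, eval_mul, eval_C, eval_X] at this
      rw [this]
      have : a ^ s = a := by
        calc a ^ s = a ^ (s - 1) * a := by rw [← pow_succ, Nat.sub_add_cancel hs1]
        _ = a := by rw [h1, one_mul]
      rw [this]
  · intro H
    obtain ⟨h1, hane⟩ := hfwd H
    set k := orderOf a with hk
    have hfin : IsOfFinOrder a := isOfFinOrder_iff_pow_eq_one.mpr ⟨s - 1, by omega, h1⟩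
    have hk0 : k ≠ 0 := (orderOf_pos_iff.mpr hfin).ne'
    have hk1 : k ≠ 1 := fun h => hane (orderOf_eq_one_iff.mp h)
    have hk2 : 2 ≤ k := by omega
    have hprim : IsPrimitiveRoot a k := IsPrimitiveRoot.orderOf a
    have hkdvd : k ∣ (s - 1) := orderOf_dvd_of_pow_eq_one h1
    set C0 : ℂ := b / (1 - a) with hC0
    have h1a : (1 : ℂ) - a ≠ 0 := sub_ne_zero.mpr (Ne.symm hane)
    have hfix : a * C0 + b = C0 := by
      rw [hC0]
      field_simp
      ring
    have hQC0 : Q.IsRoot C0 := by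
      have h2 := H C0
      rw [hfix] at h2
      have h3 : (1 - a) * Q.eval C0 = 0 := by linear_combination h2
      rcases mul_eq_zero.mp h3 with h | h
      · exact absurd h h1a
      · exact h
    set ν := Q.rootMultiplicity C0 with hν
    have hν1 : 1 ≤ ν := (Q.rootMultiplicity_pos hQ0).mpr hQC0
    obtain ⟨R, hfac, hnd⟩ := Q.exists_eq_pow_rootMultiplicity_mul_and_not_dvd hQ0 C0
    have hRC0 : R.eval C0 ≠ 0 := fun h => hnd (dvd_iff_isRoot.mpr h)
    -- pointwise identity away from C0
    have hpt : ∀ w : ℂ, w ≠ C0 → a ^ ν * R.eval (a * w + b) = a * R.eval w := by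
      intro w hw
      have e1 := H w
      rw [hfac] at e1
      simp only [eval_mul, eval_pow, eval_sub, eval_X, eval_C] at e1
      have hshift : a * w + b - C0 = a * (w - C0) := by
        linear_combination hfix
      rw [hshift, mul_pow] at e1
      have hwC : (w - C0) ^ ν ≠ 0 := pow_ne_zero _ (sub_ne_zero.mpr hw)
      apply mul_right_cancel₀ hwC
      linear_combination e1
    -- promote to polynomial identity
    have hP : C (a ^ ν) * R.comp (C a * X + C b) - C a * R = 0 := by
      apply Polynomial.eq_zero_of_infinite_isRoot
      apply Set.Infinite.mono (s := {C0}ᶜ)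
      · intro w hw
        simp only [Set.mem_compl_iff, Set.mem_singleton_iff] at hw
        simp only [Set.mem_setOf_eq, IsRoot, eval_sub, eval_mul, eval_C, eval_comp,
          eval_add, eval_X]
        rw [hpt w hw]
        ring
      · exact Set.Finite.infinite_compl (Set.finite_singleton C0)
    have h4 := congrArg (eval C0) hP
    simp only [eval_sub, eval_mul, eval_C, eval_comp, eval_add, eval_X, eval_zero] at h4
    rw [hfix] at h4
    have h5 : a ^ ν * R.eval C0 = a * R.eval C0 := by linear_combination h4
    have h6 : a ^ ν = a := mul_right_cancel₀ hRC0 h5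
    have h7 : a ^ (ν - 1) = 1 := by
      apply mul_right_cancel₀ ha
      rw [one_mul, ← pow_succ, Nat.sub_add_cancel hν1]
      exact h6
    exact ⟨k, hk2, hprim, hkdvd, hν1, orderOf_dvd_of_pow_eq_one h7⟩
end
end
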